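/- Let f ∈ ℂ[x,y] be a homogeneous polynomial of degree d > 1. Then the Jacobian ideal J_f coincides, as a ℂ-linear subspace of ℂ[x,y], with D_f + f·ℂ[x,y]; that is, every element of J_f can be written as (f_x·∂g/∂y − f_y·∂g/∂x) + f·h for some g, h ∈ ℂ[x,y], and conversely every such element lies in J_f. -/
import Mathlib

open MvPolynomial

open MvPolynomial

private lemma euler2 {m : ℕ} {p : MvPolynomial (Fin 2) ℂ} (hp : p.IsHomogeneous m) :
    X 0 * pderiv 0 p + X 1 * pderiv 1 p = C (m : ℂ) * p := by
  rw [← smul_eq_C_mul]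
  conv_lhs => rw [p.as_sum]
  conv_rhs => rw [p.as_sum]
  rw [map_sum, map_sum, Finset.mul_sum, Finset.mul_sum, Finset.smul_sum,
    ← Finset.sum_add_distrib]
  refine Finset.sum_congr rfl fun s hs => ?_
  have hdeg : s 0 + s 1 = m := by
    have h1 : s.degree = m := by
      rw [Finsupp.degree_eq_weight_one]; exact hp (mem_support_iff.mp hs)
    rw [← h1]
    show _ = ∑ i ∈ s.support, s i
    rw [Finset.sum_subset (Finset.subset_univ s.support)
      (by intro i _ hi; simpa using hi), Fin.sum_univ_two]
  have key : ∀ i : Fin 2, X i * pderiv i (monomial s (coeff s p)) =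
      monomial s (coeff s p * s i) := by
    intro i
    rw [pderiv_monomial]
    rcases Nat.eq_zero_or_pos (s i) with h | h
    · simp [h]
    · rw [X, monomial_mul, one_mul, add_comm,
        tsub_add_cancel_of_le (Finsupp.single_le_iff.mpr h)]
  rw [key 0, key 1, smul_monomial, ← map_add]
  congr 1
  rw [← mul_add, ← Nat.cast_add, hdeg, smul_eq_mul, mul_comm]

private lemma piece0' {d m : ℕ} {f u : MvPolynomial (Fin 2) ℂ} (hf : f.IsHomogeneous d)
    (hu : u.IsHomogeneous m) :
    C ((m : ℂ) + 1) * (u * pderiv 0 f) =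
      (pderiv 0 f * pderiv 1 (X 1 * u) - pderiv 1 f * pderiv 0 (X 1 * u)) +
        f * (C (d : ℂ) * pderiv 0 u) := by
  have h1 := euler2 hf
  have h2 := euler2 hu
  simp only [pderiv_mul, pderiv_X, Pi.single_eq_same, Pi.single_eq_of_ne (by decide : (1 : Fin 2) ≠ 0)]
  rw [map_add, map_one]
  linear_combination pderiv 0 u * h1 - pderiv 0 f * h2

private lemma piece1' {d m : ℕ} {f v : MvPolynomial (Fin 2) ℂ} (hf : f.IsHomogeneous d)
    (hv : v.IsHomogeneous m) :
    C ((m : ℂ) + 1) * (v * pderiv 1 f) =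
      (pderiv 0 f * pderiv 1 (-(X 0 * v)) - pderiv 1 f * pderiv 0 (-(X 0 * v))) +
        f * (C (d : ℂ) * pderiv 1 v) := by
  have h1 := euler2 hf
  have h2 := euler2 hv
  simp only [map_neg, pderiv_mul, pderiv_X, Pi.single_eq_same,
    Pi.single_eq_of_ne (by decide : (0 : Fin 2) ≠ 1)]
  rw [map_add, map_one]
  linear_combination pderiv 1 v * h1 - pderiv 1 f * h2

private def Pprop (f w : MvPolynomial (Fin 2) ℂ) : Prop :=
  ∃ g h : MvPolynomial (Fin 2) ℂ,
    w = (pderiv 0 f * pderiv 1 g - pderiv 1 f * pderiv 0 g) + f * h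

private lemma Pprop_zero (f : MvPolynomial (Fin 2) ℂ) : Pprop f 0 := ⟨0, 0, by simp⟩

private lemma Pprop_add {f w₁ w₂ : MvPolynomial (Fin 2) ℂ} (h₁ : Pprop f w₁)
    (h₂ : Pprop f w₂) : Pprop f (w₁ + w₂) := by
  obtain ⟨g₁, k₁, rfl⟩ := h₁
  obtain ⟨g₂, k₂, rfl⟩ := h₂
  exact ⟨g₁ + g₂, k₁ + k₂, by simp [map_add]; ring⟩

private lemma Pprop_of_eq {m : ℕ} {f : MvPolynomial (Fin 2) ℂ} {g₀ h₀ : MvPolynomial (Fin 2) ℂ}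
    {w : MvPolynomial (Fin 2) ℂ}
    (key : C ((m : ℂ) + 1) * w =
      (pderiv 0 f * pderiv 1 g₀ - pderiv 1 f * pderiv 0 g₀) + f * h₀) :
    Pprop f w := by
  have hm : ((m : ℂ) + 1) ≠ 0 := Nat.cast_add_one_ne_zero m
  refine ⟨C ((m : ℂ) + 1)⁻¹ * g₀, C ((m : ℂ) + 1)⁻¹ * h₀, ?_⟩
  rw [pderiv_C_mul, pderiv_C_mul]
  have : w = C ((m : ℂ) + 1)⁻¹ * (C ((m : ℂ) + 1) * w) := by
    rw [← mul_assoc, ← C_mul, inv_mul_cancel₀ hm, C_1, one_mul]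
  rw [this, key]
  ring

private lemma Pprop_mul0 {d : ℕ} {f : MvPolynomial (Fin 2) ℂ} (hf : f.IsHomogeneous d)
    (u : MvPolynomial (Fin 2) ℂ) : Pprop f (u * pderiv 0 f) := by
  conv in u * _ => rw [← u.sum_homogeneousComponent]
  rw [Finset.sum_mul]
  exact Finset.sum_induction _ (Pprop f) (fun _ _ => Pprop_add) (Pprop_zero f)
    (fun i _ => Pprop_of_eq (m := i)
      (piece0' hf (homogeneousComponent_isHomogeneous i u)))

private lemma Pprop_mul1 {d : ℕ} {f : MvPolynomial (Fin 2) ℂ} (hf : f.IsHomogeneous d)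
    (v : MvPolynomial (Fin 2) ℂ) : Pprop f (v * pderiv 1 f) := by
  conv in v * _ => rw [← v.sum_homogeneousComponent]
  rw [Finset.sum_mul]
  exact Finset.sum_induction _ (Pprop f) (fun _ _ => Pprop_add) (Pprop_zero f)
    (fun i _ => Pprop_of_eq (m := i)
      (piece1' hf (homogeneousComponent_isHomogeneous i v)))

theorem statement0 (f : MvPolynomial (Fin 2) ℂ) (d : ℕ) (hd : 1 < d)
    (hf : f.IsHomogeneous d) (w : MvPolynomial (Fin 2) ℂ) :
    w ∈ Ideal.span ({pderiv 0 f, pderiv 1 f} : Set (MvPolynomial (Fin 2) ℂ)) ↔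
      ∃ g h : MvPolynomial (Fin 2) ℂ,
        w = (pderiv 0 f * pderiv 1 g - pderiv 1 f * pderiv 0 g) + f * h := by
  have h1 := euler2 hf
  have hdne : (d : ℂ) ≠ 0 := by
    exact_mod_cast Nat.pos_of_ne_zero (by omega) |>.ne'
  constructor
  · intro hw
    obtain ⟨u, v, huv⟩ := Ideal.mem_span_pair.mp hw
    rw [← huv]
    exact Pprop_add (Pprop_mul0 hf u) (Pprop_mul1 hf v)
  · rintro ⟨g, h, rfl⟩
    rw [Ideal.mem_span_pair]
    refine ⟨pderiv 1 g + C ((d : ℂ)⁻¹) * (X 0 * h),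
      -pderiv 0 g + C ((d : ℂ)⁻¹) * (X 1 * h), ?_⟩
    have hC : C ((d : ℂ)⁻¹) * C ((d : ℂ)) = (1 : MvPolynomial (Fin 2) ℂ) := by
      rw [← C_mul, inv_mul_cancel₀ hdne, C_1]
    linear_combination C ((d : ℂ)⁻¹) * h * h1 + f * h * hC
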